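/- With X_{π_j} as X with its j-th component replaced by an independent copy of X^{(j)}, one has E[(m(X) - E[m(X_{π_j})|X^{(-j)}])^2] = E[Var(m(X)|X^{(-j)})] + E[(E[m(X)|X^{(-j)}] - E[m(X_{π_j})|X^{(-j)}])^2]. -/

import Mathlib

open MeasureTheory ProbabilityTheory
open scoped ENNReal NNReal

noncomputable section

/-- The σ-algebra generated by the components of `X` other than the `j`-th. -/
def sigmaWithout {Ω : Type*} [MeasurableSpace Ω] {p : ℕ} (X : Ω → Fin p → ℝ) (j : Fin p) :
    MeasurableSpace Ω :=
  MeasurableSpace.comap (fun ω => fun k : {k : Fin p // k ≠ j} => X ω (k : Fin p)) inferInstance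

/-- `X_{π_j}` : the vector `X` with its `j`-th component replaced by `X'`. -/
def permuted {Ω : Type*} {p : ℕ} (X : Ω → Fin p → ℝ) (j : Fin p) (X' : Ω → ℝ) :
    Ω → Fin p → ℝ :=
  fun ω => Function.update (X ω) j (X' ω)

/-- Conditional expectation of an `L²` function (w.r.t. a finite measure) is in `L²`. -/
lemma memLp_two_condexp_aux {α : Type*} {m m0 : MeasurableSpace α} {μ : Measure α}
    [IsFiniteMeasure μ] (hm : m ≤ m0) {f : α → ℝ} (hf : MemLp f 2 μ) :
    MemLp (μ[f|m]) 2 μ := by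
  haveI : SigmaFinite (μ.trim hm) := by
    haveI : IsFiniteMeasure (μ.trim hm) := isFiniteMeasure_trim hm
    infer_instance
  set fL : Lp ℝ 2 μ := hf.toLp f with hfL
  have hcond : (μ[f|m]) =ᵐ[μ] (condExpL2 ℝ ℝ hm fL : α → ℝ) := by
    refine (ae_eq_condExp_of_forall_setIntegral_eq hm (hf.integrable (by norm_num))
      (fun s _ hμs => integrableOn_condExpL2_of_measure_ne_top hm hμs.ne fL)
      (fun s hs hμs => ?_) (aestronglyMeasurable_condExpL2 hm fL)).symm
    rw [integral_condExpL2_eq hm fL hs hμs.ne]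
    exact setIntegral_congr_ae (hm s hs) ((hf.coeFn_toLp).mono fun x hx _ => hx)
  exact (Lp.memLp ((condExpL2 ℝ ℝ hm fL : lpMeas ℝ ℝ m 2 μ) : Lp ℝ 2 μ)).ae_eq hcond.symm

/-- The Ishwaran–Kogalur MDA limit decomposes as the unnormalized total Sobol index
plus a dependence-induced bias term:
`E[(m(X) - E[m(X_{π_j})|X^{(-j)}])²]
  = E[Var(m(X)|X^{(-j)})] + E[(E[m(X)|X^{(-j)}] - E[m(X_{π_j})|X^{(-j)}])²]`. -/

theorem ik_mda_decomposition
    {Ω : Type*} [MeasureSpace Ω] [IsProbabilityMeasure (ℙ : Measure Ω)]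
    {p : ℕ} (j : Fin p) (X : Ω → Fin p → ℝ) (X' : Ω → ℝ)
    (m : (Fin p → ℝ) → ℝ) (hmMeas : Measurable m)
    (hL2 : MemLp (fun ω => m (X ω)) 2 ℙ)
    (hL2π : MemLp (fun ω => m (permuted X j X' ω)) 2 ℙ)
    (hX : Measurable X) (hX' : Measurable X')
    -- `X'` is an independent copy of the `j`-th component of `X`
    (hcopy : Measure.map X' ℙ = Measure.map (fun ω => X ω j) ℙ)
    (hindep : IndepFun X' X ℙ) :
    ∫ ω, (m (X ω) - (ℙ[fun ω' => m (permuted X j X' ω') | sigmaWithout X j]) ω) ^ 2 ∂ℙ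
      = (∫ ω, (m (X ω) - (ℙ[fun ω' => m (X ω') | sigmaWithout X j]) ω) ^ 2 ∂ℙ)
        + (∫ ω, ((ℙ[fun ω' => m (X ω') | sigmaWithout X j]) ω
            - (ℙ[fun ω' => m (permuted X j X' ω') | sigmaWithout X j]) ω) ^ 2 ∂ℙ) := by

  classical
  set f : Ω → ℝ := fun ω => m (X ω) with hfdef
  set fπ : Ω → ℝ := fun ω => m (permuted X j X' ω) with hfπdef
  have hm : sigmaWithout X j ≤ (inferInstance : MeasurableSpace Ω) :=
    Measurable.comap_le (measurable_pi_lambda _ fun k =>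
      (measurable_pi_apply (k : Fin p)).comp hX)
  set h : Ω → ℝ := ℙ[f | sigmaWithout X j] with hhdef
  set g : Ω → ℝ := ℙ[fπ | sigmaWithout X j] with hgdef
  have hfi : Integrable f ℙ := hL2.integrable (by norm_num)
  have hfπi : Integrable fπ ℙ := hL2π.integrable (by norm_num)
  have hhi : Integrable h ℙ := integrable_condExp
  have hgi : Integrable g ℙ := integrable_condExp
  have hhL2 : MemLp h 2 ℙ := memLp_two_condexp_aux hm hL2
  have hgL2 : MemLp g 2 ℙ := memLp_two_condexp_aux hm hL2π
  have hφsm : StronglyMeasurable[sigmaWithout X j] (h - g) :=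
    stronglyMeasurable_condExp.sub stronglyMeasurable_condExp
  have hfh : MemLp (f - h) 2 ℙ := hL2.sub hhL2
  have hhg : MemLp (h - g) 2 ℙ := hhL2.sub hgL2
  -- product of two L² functions is integrable
  have hmul : ∀ (u v : Ω → ℝ), MemLp u 2 ℙ → MemLp v 2 ℙ →
      Integrable (u * v) ℙ := by
    intro u v hu hv
    have h12 : (1 : ℝ≥0∞)/1 = 1/2 + 1/2 := by
      simp only [one_div, inv_one]
      exact ENNReal.inv_two_add_inv_two.symm
    have : MemLp (u • v) 1 ℙ := hv.smul hu (hpqr := ⟨by rw [inv_one]; exact ENNReal.inv_two_add_inv_two⟩)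
    simpa [smul_eq_mul] using this.integrable le_rfl
  -- the cross term vanishes
  have hcross : ∫ ω, (h ω - g ω) * (f ω - h ω) ∂ℙ = 0 := by
    have hint : Integrable ((h - g) * (f - h)) ℙ := hmul _ _ hhg hfh
    have hcond : ℙ[(h - g) * (f - h) | sigmaWithout X j]
        =ᵐ[ℙ] (h - g) * ℙ[f - h | sigmaWithout X j] :=
      condExp_mul_of_stronglyMeasurable_left hφsm hint (hfi.sub hhi)
    have hzero : ℙ[f - h | sigmaWithout X j] =ᵐ[ℙ] 0 := by
      have h1 : ℙ[f - h | sigmaWithout X j] =ᵐ[ℙ]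
          ℙ[f | sigmaWithout X j] - ℙ[h | sigmaWithout X j] := condExp_sub hfi hhi _
      have h2 : ℙ[h | sigmaWithout X j] = h :=
        condExp_of_stronglyMeasurable hm stronglyMeasurable_condExp hhi
      filter_upwards [h1] with ω hω
      simp [hω, h2, ← hhdef]
    have hzero' : ℙ[(h - g) * (f - h) | sigmaWithout X j] =ᵐ[ℙ] 0 := by
      filter_upwards [hcond, hzero] with ω h1 h2
      simp [h1, Pi.mul_apply, h2]
    have key : ∫ x, (ℙ[(h - g) * (f - h) | sigmaWithout X j]) x ∂ℙ
        = ∫ x, ((h - g) * (f - h)) x ∂ℙ := integral_condExp hm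
    have : ∫ ω, ((h - g) * (f - h)) ω ∂ℙ = 0 := by
      rw [← key, integral_congr_ae hzero']
      simp
    simpa [Pi.mul_apply, Pi.sub_apply] using this
  -- pointwise expansion and reassembly
  have hexp : ∀ ω, (f ω - g ω) ^ 2
      = (f ω - h ω) ^ 2 + ((h ω - g ω) ^ 2 + 2 * ((h ω - g ω) * (f ω - h ω))) := by
    intro ω; ring
  have hifh : Integrable (fun ω => (f ω - h ω) ^ 2) ℙ := hfh.integrable_sq
  have hihg : Integrable (fun ω => (h ω - g ω) ^ 2) ℙ := hhg.integrable_sq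
  have hicross : Integrable (fun ω => 2 * ((h ω - g ω) * (f ω - h ω))) ℙ := by
    have h1 := hmul _ _ hhg hfh
    have h2 : Integrable (fun ω => (h ω - g ω) * (f ω - h ω)) ℙ := h1
    exact h2.const_mul 2
  have hsum2 : Integrable (fun ω => (h ω - g ω) ^ 2 + 2 * ((h ω - g ω) * (f ω - h ω))) ℙ :=
    hihg.add hicross
  calc ∫ ω, (f ω - g ω) ^ 2 ∂ℙ
      = ∫ ω, ((f ω - h ω) ^ 2 + ((h ω - g ω) ^ 2 + 2 * ((h ω - g ω) * (f ω - h ω)))) ∂ℙ :=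
        integral_congr_ae (Filter.Eventually.of_forall hexp)
    _ = (∫ ω, (f ω - h ω) ^ 2 ∂ℙ)
        + ((∫ ω, (h ω - g ω) ^ 2 ∂ℙ) + ∫ ω, 2 * ((h ω - g ω) * (f ω - h ω)) ∂ℙ) := by
        rw [integral_add hifh hsum2, integral_add hihg hicross]
    _ = (∫ ω, (f ω - h ω) ^ 2 ∂ℙ) + ∫ ω, (h ω - g ω) ^ 2 ∂ℙ := by
        rw [integral_const_mul, hcross, mul_zero, add_zero]
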